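/- Let |ψ⟩ ∈ ℂ^{d₁} ⊗ ℂ^{d₂} be a unit vector. Then the partial transpose (on the second factor) of the rank-one projection |ψ⟩⟨ψ| is positive semidefinite if and only if |ψ⟩ is a product vector u ⊗ w. -/

import Mathlib

open scoped ComplexConjugate ComplexOrder

/-- The product (tensor) vector u ⊗ w in ℂ^{d₁} ⊗ ℂ^{d₂} ≅ ℂ^{d₁·d₂}. -/
noncomputable def tp {d₁ d₂ : ℕ} (u : EuclideanSpace ℂ (Fin d₁))
    (w : EuclideanSpace ℂ (Fin d₂)) : EuclideanSpace ℂ (Fin d₁ × Fin d₂) :=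
  WithLp.toLp 2 fun p : Fin d₁ × Fin d₂ => u p.1 * w p.2

/-- Partial transpose on the second tensor factor. -/
def ptrans {d₁ d₂ : ℕ} (X : Matrix (Fin d₁ × Fin d₂) (Fin d₁ × Fin d₂) ℂ) :
    Matrix (Fin d₁ × Fin d₂) (Fin d₁ × Fin d₂) ℂ :=
  Matrix.of fun p q => X (p.1, q.2) (q.1, p.2)

open Matrix in
/-- A rank-one "Gram" matrix is positive semidefinite. -/
lemma rank_one_psd {n : Type*} [Fintype n] [DecidableEq n] (v : n → ℂ) :
    (Matrix.of fun p q => v p * conj (v q)).PosSemidef := by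
  refine Matrix.PosSemidef.of_dotProduct_mulVec_nonneg ?_ ?_
  · ext p q
    simp [Matrix.conjTranspose_apply, mul_comm]
  · intro x
    have : (star x) ⬝ᵥ ((Matrix.of fun p q => v p * conj (v q)) *ᵥ x)
        = star (∑ q, conj (v q) * x q) * (∑ q, conj (v q) * x q) := by
      simp only [dotProduct, Matrix.mulVec, Matrix.of_apply, Pi.star_apply,
        star_sum, star_mul', RCLike.star_def, Complex.conj_conj]
      rw [Finset.sum_mul_sum]
      refine Finset.sum_congr rfl fun p _ => ?_
      rw [Finset.mul_sum]
      refine Finset.sum_congr rfl fun q _ => ?_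
      ring
    rw [this]
    exact star_mul_self_nonneg _

lemma star_single' {n : Type*} [DecidableEq n] (p : n) (c : ℂ) :
    star (Pi.single p c : n → ℂ) = Pi.single p (star c) := by
  ext q
  by_cases h : q = p <;> simp [h, Pi.single_apply]

open Matrix in
/-- If the partial transpose of |ψ⟩⟨ψ| is PSD, then all 2×2 minors of ψ
(viewed as a d₁ × d₂ matrix) vanish. -/
lemma minors {d₁ d₂ : ℕ} (ψ : EuclideanSpace ℂ (Fin d₁ × Fin d₂))
    (h : (ptrans (Matrix.of fun p q => ψ p * conj (ψ q))).PosSemidef)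
    (i k : Fin d₁) (j l : Fin d₂) : ψ (i, j) * ψ (k, l) = ψ (i, l) * ψ (k, j) := by
  set a := ψ (i, j) with ha
  set b := ψ (i, l) with hb
  set c := ψ (k, j) with hc
  set d := ψ (k, l) with hd
  set M := ptrans (Matrix.of fun p q => ψ p * conj (ψ q)) with hM
  set x : (Fin d₁ × Fin d₂) → ℂ :=
    Pi.single (i, j) (conj c) + Pi.single (i, l) (conj d)
      + Pi.single (k, j) (-conj a) + Pi.single (k, l) (-conj b) with hx
  have hq := h.dotProduct_mulVec_nonneg x
  set m := a * d - b * c with hm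
  have key : star x ⬝ᵥ M *ᵥ x = -(m * conj m + m * conj m) := by
    simp only [hx, star_add, star_single', Matrix.mulVec_add, Matrix.mulVec_neg,
      Matrix.mulVec_single, dotProduct_add, add_dotProduct,
      single_dotProduct, hM, ptrans, Matrix.of_apply, star_neg, Pi.single_neg,
      dotProduct_neg, neg_dotProduct]
    simp only [← ha, ← hb, ← hc, ← hd, hm, map_sub, _root_.map_mul, star_neg, RCLike.star_def,
      Complex.conj_conj, Pi.smul_apply, Matrix.col_apply, MulOpposite.smul_eq_mul_unop,
      MulOpposite.unop_op, Matrix.of_apply]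
    ring
  rw [key] at hq
  have hm0 : m = 0 := by
    rw [Complex.mul_conj] at hq
    have : (0:ℝ) ≤ -(Complex.normSq m + Complex.normSq m) := by
      have := hq
      rw [← Complex.ofReal_add, ← Complex.ofReal_neg] at this
      exact_mod_cast this
    have h1 : Complex.normSq m ≤ 0 := by linarith
    have h2 : 0 ≤ Complex.normSq m := Complex.normSq_nonneg m
    exact Complex.normSq_eq_zero.mp (le_antisymm h1 h2)
  linear_combination hm0

/-- the partial transpose of the rank-one projection |ψ⟩⟨ψ| of a
unit vector ψ is positive semidefinite iff ψ is a product vector. -/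
theorem stmt9 (d₁ d₂ : ℕ) (ψ : EuclideanSpace ℂ (Fin d₁ × Fin d₂)) (hψ : ‖ψ‖ = 1) :
    (ptrans (Matrix.of fun p q => ψ p * conj (ψ q))).PosSemidef ↔
      ∃ (u : EuclideanSpace ℂ (Fin d₁)) (w : EuclideanSpace ℂ (Fin d₂)), ψ = tp u w := by
  constructor
  · intro h
    -- ψ ≠ 0, so some entry is nonzero
    have hne : ψ ≠ 0 := by
      intro h0
      rw [h0, norm_zero] at hψ
      norm_num at hψ
    obtain ⟨p₀, hp₀⟩ : ∃ p, ψ p ≠ 0 := by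
      by_contra hc
      push_neg at hc
      exact hne (by ext p; exact hc p)
    refine ⟨(WithLp.toLp 2 (fun i => ψ (i, p₀.2) / ψ p₀) : EuclideanSpace ℂ (Fin d₁)),
      (WithLp.toLp 2 (fun j => ψ (p₀.1, j)) : EuclideanSpace ℂ (Fin d₂)), ?_⟩
    ext p
    have hmin := minors ψ h p.1 p₀.1 p.2 p₀.2
    simp only [tp]
    field_simp
    rw [mul_comm (ψ p) (ψ p₀)]
    have : ψ p₀ = ψ (p₀.1, p₀.2) := by rw [Prod.mk.eta]
    rw [this]
    have hp : ψ p = ψ (p.1, p.2) := by rw [Prod.mk.eta]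
    rw [hp]
    linear_combination hmin
  · rintro ⟨u, w, rfl⟩
    have : ptrans (Matrix.of fun p q => tp u w p * conj (tp u w q))
        = Matrix.of fun p q => (u p.1 * conj (w p.2)) * conj (u q.1 * conj (w q.2)) := by
      ext p q
      simp only [ptrans, Matrix.of_apply, tp, _root_.map_mul, Complex.conj_conj]
      ring
    rw [this]
    exact rank_one_psd _
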